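/- The function F(T) = 2T²(2T+1)²√(T+1)/(3T+1)^{3/2} satisfies: F(T) > 0 for all T ∈ (-1/3, ∞) with T ≠ 0, F(0) = 0, F is strictly decreasing on (-1/3, 0], and F is strictly increasing on [0, ∞). -/

import Mathlib

/-- `F(T) = 2T²(2T+1)²√(T+1)/(3T+1)^{3/2}`. -/
noncomputable def Ffun (T : ℝ) : ℝ :=
  2 * T ^ 2 * (2 * T + 1) ^ 2 * Real.sqrt (T + 1) / (3 * T + 1) ^ ((3 : ℝ) / 2)

/-- The square of `Ffun`, a rational function. -/
noncomputable def Gfun (T : ℝ) : ℝ :=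
  4 * T ^ 4 * (2 * T + 1) ^ 4 * (T + 1) / (3 * T + 1) ^ 3

lemma cubic_pos {T : ℝ} (h : -(1:ℝ)/3 < T) :
    0 < 18 * T ^ 3 + 27 * T ^ 2 + 12 * T + 2 := by
  have h1 : (0:ℝ) < 3 * T + 1 := by linarith
  nlinarith [pow_pos h1 3, sq_nonneg (3 * T + 1), mul_pos h1 h1]

lemma Gfun_hasDerivAt {T : ℝ} (h : (3 : ℝ) * T + 1 ≠ 0) :
    HasDerivAt Gfun
      (8 * T ^ 3 * (2 * T + 1) ^ 3 * (18 * T ^ 3 + 27 * T ^ 2 + 12 * T + 2) /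
        (3 * T + 1) ^ 4) T := by
  have h1 : HasDerivAt (fun T : ℝ => 4 * T ^ 4) (4 * (4 * T ^ 3)) T := by
    simpa using (hasDerivAt_pow 4 T).const_mul 4
  have h2i : HasDerivAt (fun T : ℝ => 2 * T + 1) 2 T := by
    simpa using ((hasDerivAt_id T).const_mul 2).add_const 1
  have h2 : HasDerivAt (fun T : ℝ => (2 * T + 1) ^ 4) (4 * (2 * T + 1) ^ 3 * 2) T := by
    simpa using h2i.fun_pow 4
  have h3 : HasDerivAt (fun T : ℝ => T + 1) 1 T := (hasDerivAt_id T).add_const 1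
  have hDi : HasDerivAt (fun T : ℝ => 3 * T + 1) 3 T := by
    simpa using ((hasDerivAt_id T).const_mul 3).add_const 1
  have hD : HasDerivAt (fun T : ℝ => (3 * T + 1) ^ 3) (3 * (3 * T + 1) ^ 2 * 3) T := by
    simpa using hDi.fun_pow 3
  have hN := (h1.mul h2).mul h3
  have hQ := hN.div hD (pow_ne_zero 3 h)
  convert hQ using 1
  · rfl
  · rfl
  · rfl
  simp only [Pi.mul_apply]
  field_simp
  ring

lemma Gfun_nonneg {T : ℝ} (h : -(1:ℝ)/3 < T) : 0 ≤ Gfun T := by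
  have h1 : (0:ℝ) < 3 * T + 1 := by linarith
  have h2 : (0:ℝ) ≤ T + 1 := by linarith
  unfold Gfun
  apply div_nonneg _ (by positivity)
  have : (0:ℝ) ≤ 4 * T ^ 4 * (2 * T + 1) ^ 4 := by positivity
  exact mul_nonneg this h2

lemma Gfun_pos {T : ℝ} (h : -(1:ℝ)/3 < T) (h0 : T ≠ 0) : 0 < Gfun T := by
  have h1 : (0:ℝ) < 3 * T + 1 := by linarith
  have h2 : (0:ℝ) < T + 1 := by linarith
  have h4 : (0:ℝ) < T ^ 4 := by positivity
  have h5 : (0:ℝ) < (2 * T + 1) ^ 4 := pow_pos (by linarith) 4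
  unfold Gfun
  apply div_pos _ (pow_pos h1 3)
  nlinarith [mul_pos (mul_pos h4 h5) h2]

lemma Ffun_eq_sqrt_Gfun {T : ℝ} (hT : -(1:ℝ)/3 < T) : Ffun T = Real.sqrt (Gfun T) := by
  have h1 : (0:ℝ) < 3 * T + 1 := by linarith
  have h2 : (0:ℝ) ≤ T + 1 := by linarith
  have hnum : Real.sqrt (4 * T ^ 4 * (2 * T + 1) ^ 4 * (T + 1))
      = 2 * T ^ 2 * (2 * T + 1) ^ 2 * Real.sqrt (T + 1) := by
    rw [show 4 * T ^ 4 * (2 * T + 1) ^ 4 * (T + 1)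
        = (2 * T ^ 2 * (2 * T + 1) ^ 2) ^ 2 * (T + 1) by ring,
      Real.sqrt_mul (sq_nonneg _), Real.sqrt_sq (by positivity)]
  have hden : Real.sqrt ((3 * T + 1) ^ 3) = (3 * T + 1) ^ ((3:ℝ)/2) := by
    rw [Real.sqrt_eq_rpow, ← Real.rpow_natCast (3 * T + 1) 3, ← Real.rpow_mul h1.le]
    norm_num
  rw [Ffun, Gfun, Real.sqrt_div (by positivity : (0:ℝ) ≤ 4 * T ^ 4 * (2 * T + 1) ^ 4 * (T + 1)),
    hnum, hden]

lemma Gfun_strictMonoOn : StrictMonoOn Gfun (Set.Ici (0 : ℝ)) := by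
  apply strictMonoOn_of_deriv_pos (convex_Ici 0)
  · intro x hx
    have h1 : (3:ℝ) * x + 1 ≠ 0 := by
      simp only [Set.mem_Ici] at hx
      nlinarith
    exact (Gfun_hasDerivAt h1).differentiableAt.continuousAt.continuousWithinAt
  · intro x hx
    rw [interior_Ici, Set.mem_Ioi] at hx
    have h1 : (0:ℝ) < 3 * x + 1 := by linarith
    rw [(Gfun_hasDerivAt h1.ne').deriv]
    have hc := cubic_pos (show -(1:ℝ)/3 < x by linarith)
    have h2 : (0:ℝ) < 2 * x + 1 := by linarith
    positivity

lemma Gfun_strictAntiOn : StrictAntiOn Gfun (Set.Ioc (-(1 : ℝ)/3) 0) := by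
  apply strictAntiOn_of_deriv_neg (convex_Ioc _ _)
  · intro x hx
    have hx1 := hx.1
    have h1 : (3:ℝ) * x + 1 ≠ 0 := by
      have : (0:ℝ) < 3 * x + 1 := by linarith
      exact this.ne'
    exact (Gfun_hasDerivAt h1).differentiableAt.continuousAt.continuousWithinAt
  · intro x hx
    rw [interior_Ioc] at hx
    obtain ⟨hx1, hx2⟩ := hx
    have h1 : (0:ℝ) < 3 * x + 1 := by linarith
    rw [(Gfun_hasDerivAt h1.ne').deriv]
    apply div_neg_of_neg_of_pos _ (pow_pos h1 4)
    have hc := cubic_pos hx1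
    have h2 : (0:ℝ) < 2 * x + 1 := by linarith
    have hx3 : x ^ 3 < 0 := by
      have h := pow_pos (neg_pos.mpr hx2) 3
      nlinarith
    nlinarith [mul_pos (mul_pos (pow_pos h2 3) hc) (neg_pos.mpr hx3)]

/-- `F` is positive on `(-1/3,∞) \ {0}`, vanishes at `0`, is strictly decreasing on
`(-1/3, 0]` and strictly increasing on `[0, ∞)`. -/
theorem Ffun_monotonicity :
    (∀ T ∈ Set.Ioi (-(1 : ℝ) / 3), T ≠ 0 → 0 < Ffun T) ∧
    Ffun 0 = 0 ∧
    StrictAntiOn Ffun (Set.Ioc (-(1 : ℝ) / 3) 0) ∧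
    StrictMonoOn Ffun (Set.Ici (0 : ℝ)) := by
  refine ⟨?_, ?_, ?_, ?_⟩
  · intro T hT h0
    rw [Set.mem_Ioi] at hT
    rw [Ffun_eq_sqrt_Gfun hT]
    exact Real.sqrt_pos.mpr (Gfun_pos hT h0)
  · simp [Ffun]
  · intro x hx y hy hxy
    have hx1 := hx.1
    have hy1 := hy.1
    rw [Ffun_eq_sqrt_Gfun hx1, Ffun_eq_sqrt_Gfun hy1]
    exact Real.sqrt_lt_sqrt (Gfun_nonneg hy1) (Gfun_strictAntiOn hx hy hxy)
  · intro x hx y hy hxy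
    rw [Set.mem_Ici] at hx hy
    have hx1 : -(1:ℝ)/3 < x := by linarith
    have hy1 : -(1:ℝ)/3 < y := by linarith
    rw [Ffun_eq_sqrt_Gfun hx1, Ffun_eq_sqrt_Gfun hy1]
    exact Real.sqrt_lt_sqrt (Gfun_nonneg hx1) (Gfun_strictMonoOn hx hy hxy)
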